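/- Let s ≥ 1 and c = (c_0, c_1, …, c_s) ∈ ℤ^{s+1} with c_0 ≠ 0, c_s ≠ 0 and gcd(c_0,…,c_s) = 1, and let m ≥ 1. Then the m × m minors of the matrix M(c,m) are relatively prime, i.e., the gcd of all determinants of m × m submatrices of M(c,m) equals 1. -/

import Mathlib

set_option synthInstance.maxHeartbeats 1000000
set_option maxHeartbeats 1000000

open Matrix

lemma aux_exists_det_ne_zero {K : Type*} [Field K] {m n : ℕ}
    (A : Matrix (Fin m) (Fin n) K)
    (hA : LinearIndependent K (fun i ↦ A i)) :
    ∃ g : Fin m ↪ Fin n, (A.submatrix id g).det ≠ 0 := by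
  classical
  have hinj : Function.Injective A.vecMulLinear := by
    rw [coe_vecMulLinear]; exact Matrix.vecMul_injective_iff.mpr hA
  have hfr : Module.finrank K (LinearMap.range A.vecMulLinear) = m := by
    rw [LinearMap.finrank_range_of_inj hinj]
    simp [Module.finrank_pi]
  have hrT : Aᵀ.rank = m := by
    rw [Matrix.rank_eq_finrank_span_cols, show Aᵀ.col = A.row from rfl, ← range_vecMulLinear]
    exact hfr
  have hr : A.rank = m := by rw [← Matrix.rank_transpose]; exact hrT
  have hspan : Submodule.span K (Set.range Aᵀ) = ⊤ := by
    apply Submodule.eq_top_of_finrank_eq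
    rw [show Set.range Aᵀ = Set.range A.col from rfl, ← Matrix.rank_eq_finrank_span_cols, hr]
    simp [Module.finrank_pi]
  obtain ⟨b, hbsub, hbspan, hbind⟩ := exists_linearIndependent K (Set.range Aᵀ)
  haveI : Fintype b := ((Set.finite_range Aᵀ).subset hbsub).fintype
  let bas : Module.Basis b K (Fin m → K) :=
    Module.Basis.mk hbind (le_of_eq (by rw [Subtype.range_coe, hbspan, hspan]))
  have hcard : Fintype.card (Fin m) = Fintype.card b := by
    have := Module.finrank_eq_card_basis bas
    simp [Module.finrank_pi] at this
    simp [this]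
  let e : Fin m ≃ b := Fintype.equivOfCardEq hcard
  have hex : ∀ x : b, ∃ j, Aᵀ j = (x : Fin m → K) := fun x => hbsub x.2
  choose j hj using hex
  have hjinj : Function.Injective j := fun x y h => Subtype.ext (by rw [← hj x, ← hj y, h])
  refine ⟨⟨fun k => j (e k), hjinj.comp e.injective⟩, ?_⟩
  set B := A.submatrix id (fun k => j (e k)) with hB
  have hcols : (fun k ↦ Bᵀ k) = fun k => ((e k : Fin m → K)) := by
    funext k
    have := hj (e k)
    rw [← this]; rfl
  have hindcols : LinearIndependent K (fun k ↦ Bᵀ k) := by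
    rw [hcols]
    exact hbind.comp e e.injective
  have hu : IsUnit B := linearIndependent_cols_iff_isUnit.mp hindcols
  have := (Matrix.isUnit_iff_isUnit_det B).mp hu
  exact this.ne_zero

/-- **Lemma.** Let `s ≥ 1` and `c = (c 0, …, c s) ∈ ℤ^(s+1)` with `c 0 ≠ 0`, `c s ≠ 0` and
`gcd (c 0, …, c s) = 1`, let `m ≥ 1`, and let `M = M(c,m)` be the `m × (m+s)` matrix whose row
`i` contains `c 0, …, c s` in columns `i, …, i+s` and zeros elsewhere. Then the `m × m` minors
of `M` are relatively prime: the gcd of the determinants of all `m × m` submatrices of `M`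
(given by choices of `m` of the `m + s` columns) equals `1`. -/
theorem minors_Mcm_coprime (s : ℕ) (hs : 1 ≤ s) (c : Fin (s + 1) → ℤ)
    (hc0 : c 0 ≠ 0) (hcs : c (Fin.last s) ≠ 0) (hgcd : Finset.gcd Finset.univ c = 1)
    (m : ℕ) (hm : 1 ≤ m) (M : Matrix (Fin m) (Fin (m + s)) ℤ)
    (hM : ∀ (i : Fin m) (j : Fin (m + s)),
      M i j = if h : (i : ℕ) ≤ (j : ℕ) ∧ (j : ℕ) ≤ (i : ℕ) + s then
          c ⟨(j : ℕ) - (i : ℕ), by omega⟩ else 0) :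
    Finset.gcd Finset.univ
      (fun g : Fin m ↪ Fin (m + s) => (M.submatrix id g).det) = 1 := by
  classical
  set D : (Fin m ↪ Fin (m + s)) → ℤ := fun g => (M.submatrix id g).det with hD
  set d : ℤ := Finset.gcd Finset.univ D with hd
  by_contra hd1
  have hna : d.natAbs ≠ 1 := by
    intro h1
    have hnorm : normalize d = d := Finset.normalize_gcd
    rcases Int.natAbs_eq_iff.mp h1 with h | h
    · exact hd1 (by simpa using h)
    · norm_num at h
      rw [h] at hnorm
      rw [show normalize (-1 : ℤ) = 1 from by decide] at hnorm
      norm_num at hnorm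
  obtain ⟨p, hp, hpd⟩ := Int.exists_prime_and_dvd hna
  set q : ℕ := p.natAbs with hq'
  have hq : q.Prime := Int.prime_iff_natAbs_prime.mp hp
  haveI : Fact q.Prime := ⟨hq⟩
  -- every minor vanishes mod q
  have hminor0 : ∀ g : Fin m ↪ Fin (m + s), ((D g : ℤ) : ZMod q) = 0 := by
    intro g
    have h1 : d ∣ D g := Finset.gcd_dvd (Finset.mem_univ g)
    have h2 : (q : ℤ) ∣ D g := Int.natAbs_dvd.mpr (hpd.trans h1)
    exact (ZMod.intCast_zmod_eq_zero_iff_dvd _ _).mpr h2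
  -- the matrix mod q
  set A : Matrix (Fin m) (Fin (m + s)) (ZMod q) := M.map (Int.cast) with hA
  -- some coefficient is nonzero mod q
  have hTne : ∃ t : Fin (s + 1), ((c t : ℤ) : ZMod q) ≠ 0 := by
    by_contra hall
    push_neg at hall
    have hdvd : (q : ℤ) ∣ Finset.gcd Finset.univ c := by
      apply Finset.dvd_gcd
      intro t _
      exact (ZMod.intCast_zmod_eq_zero_iff_dvd _ _).mp (hall t)
    rw [hgcd] at hdvd
    have := Int.le_of_dvd one_pos hdvd
    have := hq.two_le
    omega
  set T : Finset (Fin (s + 1)) := Finset.univ.filter (fun t => ((c t : ℤ) : ZMod q) ≠ 0) with hT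
  have hTne' : T.Nonempty := by
    obtain ⟨t, ht⟩ := hTne
    exact ⟨t, by simp [hT, ht]⟩
  set t0 : Fin (s + 1) := T.min' hTne' with ht0def
  have ht0mem : t0 ∈ T := T.min'_mem hTne'
  have ht0ne : ((c t0 : ℤ) : ZMod q) ≠ 0 := by
    have := ht0mem
    simp [hT] at this
    exact this
  have ht0min : ∀ t : Fin (s + 1), (t : ℕ) < (t0 : ℕ) → ((c t : ℤ) : ZMod q) = 0 := by
    intro t ht
    by_contra hne
    have : t ∈ T := by simp [hT, hne]
    have := T.min'_le t this
    omega
  -- rows of A are linearly independent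
  have hind : LinearIndependent (ZMod q) (fun i ↦ A i) := by
    rw [Fintype.linearIndependent_iff]
    intro v hv
    by_contra hvn
    push_neg at hvn
    obtain ⟨i, hi⟩ := hvn
    set S : Finset (Fin m) := Finset.univ.filter (fun i => v i ≠ 0) with hS
    have hSne : S.Nonempty := ⟨i, by simp [hS, hi]⟩
    set i0 : Fin m := S.min' hSne with hi0def
    have hi0mem : i0 ∈ S := S.min'_mem hSne
    have hi0ne : v i0 ≠ 0 := by
      have := hi0mem; simp [hS] at this; exact this
    have hi0min : ∀ i : Fin m, v i ≠ 0 → i0 ≤ i := fun i hvi =>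
      S.min'_le i (by simp [hS, hvi])
    have hj0lt : (i0 : ℕ) + (t0 : ℕ) < m + s := by
      have h1 := i0.isLt
      have h2 := t0.isLt
      omega
    set j0 : Fin (m + s) := ⟨(i0 : ℕ) + (t0 : ℕ), hj0lt⟩ with hj0def
    have hsum : ∑ i, v i * A i j0 = 0 := by
      have := congrFun hv j0
      simpa [Finset.sum_apply] using this
    rw [Finset.sum_eq_single i0] at hsum
    · -- v i0 * A i0 j0 = 0, but both factors nonzero
      have hM0 : M i0 j0 = c t0 := by
        rw [hM i0 j0]
        have hcond : (i0 : ℕ) ≤ (j0 : ℕ) ∧ (j0 : ℕ) ≤ (i0 : ℕ) + s := by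
          constructor <;> simp [hj0def] <;> omega
        rw [dif_pos hcond]
        congr 1
        apply Fin.ext
        simp [hj0def]
      have hA0 : A i0 j0 = ((c t0 : ℤ) : ZMod q) := by
        simp [hA, Matrix.map_apply, hM0]
      rw [hA0] at hsum
      exact (mul_ne_zero hi0ne ht0ne) hsum
    · intro b _ hbne
      by_cases hvb : v b = 0
      · rw [hvb, zero_mul]
      · have hble : i0 ≤ b := hi0min b hvb
        have hblt : (i0 : ℕ) < (b : ℕ) := by
          rcases lt_or_eq_of_le hble with h | h
          · exact h
          · exact absurd h.symm hbne
        have hAb : A b j0 = 0 := by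
          rw [hA, Matrix.map_apply, hM b j0]
          by_cases hcond : (b : ℕ) ≤ (j0 : ℕ) ∧ (j0 : ℕ) ≤ (b : ℕ) + s
          · rw [dif_pos hcond]
            apply ht0min
            show ((j0 : ℕ) - (b : ℕ)) < (t0 : ℕ)
            have hj0v : (j0 : ℕ) = (i0 : ℕ) + (t0 : ℕ) := rfl
            omega
          · rw [dif_neg hcond]; simp
        rw [hAb, mul_zero]
    · intro h
      exact absurd (Finset.mem_univ i0) h
  -- contradiction: some minor of A is nonzero
  obtain ⟨g, hg⟩ := aux_exists_det_ne_zero A hind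
  apply hg
  have : (A.submatrix id g).det = ((D g : ℤ) : ZMod q) := by
    rw [hA, hD]
    rw [Matrix.submatrix_map]
    exact ((Int.castRingHom (ZMod q)).map_det (Matrix.submatrix M id g)).symm
  rw [this, hminor0 g]
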